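/- Fix m ≥ 0 and rationals q_0 > q_1 > … > q_m, with cells Δ⁰, …, Δ^{m+1} as in the definition of the subdivision Ξ₀ of ℚ. Let a : Fin (m+2) → ℤ take values in {1, −1} and suppose that q_i ∈ ℤ whenever 0 ≤ i ≤ m and a i ≠ a (i+1). Then for every λ₀ ∈ ℤ there exist integers λ₀, λ₁, …, λ_{m+1} (beginning with the given λ₀) with λ_{i+1} = λ_i whenever a i = a (i+1) and λ_i + λ_{i+1} = q_i whenever a i ≠ a (i+1), and an admissible subdivision decomposition (A, B) of Ξ₀ such that for every 0 ≤ i ≤ m+1: if a i = 1 then A_i = Δ^i − λ_i (the translate by −λ_i), and moreover B_i = {λ_i} when 1 ≤ i ≤ m; and if a i = −1 then B_i = Δ^i − λ_i, and moreover A_i = {λ_i} when 1 ≤ i ≤ m. This is the converse direction of the paper's Remark: an integer λ₀ and a binary (m+2)-tuple a define a subdivision decomposition of Ξ₀, which is admissible exactly when the breakpoint Δ₀^i ∩ Δ₀^{i+1} is a lattice point for every i with a_i ≠ a_{i+1}. -/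

import Mathlib

open Pointwise

/-- The cells Δ⁰, …, Δ^{m+1} of the polyhedral subdivision Ξ₀ of ℚ with breakpoints
q_0 > q_1 > … > q_m: Δ⁰ = [q_0, ∞), Δ^i = [q_i, q_{i−1}] for 1 ≤ i ≤ m, and
Δ^{m+1} = (−∞, q_m]. -/
def cell (m : ℕ) (q : Fin (m + 1) → ℚ) (i : Fin (m + 2)) : Set ℚ :=
  if i.val = 0 then Set.Ici (q 0)
  else if h : i.val = m + 1 then Set.Iic (q (Fin.last m))
  else Set.Icc (q ⟨i.val, by have := i.isLt; omega⟩)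
    (q ⟨i.val - 1, by have := i.isLt; omega⟩)

/-- A subdivision decomposition (Ξ̃₀, Ξ̃_t) of Ξ₀: families A_i, B_i of nonempty subsets
of ℚ, each a singleton, a closed bounded interval, or a closed half-line, such that
A_i + B_i = Δ^i (Minkowski sum), every element of A_i (resp. B_i) is ≥ every element of
A_{i+1} (resp. B_{i+1}), and both families cover ℚ. -/
structure SubdivDecomp (m : ℕ) (q : Fin (m + 1) → ℚ) where
  A : Fin (m + 2) → Set ℚ
  B : Fin (m + 2) → Set ℚ
  shapeA : ∀ i, (∃ p r : ℚ, p ≤ r ∧ A i = Set.Icc p r) ∨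
    (∃ p : ℚ, A i = Set.Ici p) ∨ (∃ p : ℚ, A i = Set.Iic p)
  shapeB : ∀ i, (∃ p r : ℚ, p ≤ r ∧ B i = Set.Icc p r) ∨
    (∃ p : ℚ, B i = Set.Ici p) ∨ (∃ p : ℚ, B i = Set.Iic p)
  sum_eq : ∀ i, A i + B i = cell m q i
  monoA : ∀ i : Fin (m + 1), ∀ x ∈ A i.succ, ∀ y ∈ A i.castSucc, x ≤ y
  monoB : ∀ i : Fin (m + 1), ∀ x ∈ B i.succ, ∀ y ∈ B i.castSucc, x ≤ y
  coverA : (⋃ i, A i) = Set.univ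
  coverB : (⋃ i, B i) = Set.univ

/-- A subdivision decomposition is admissible if for each 1 ≤ i ≤ m at least one of
A_i, B_i is a lattice point. -/
def SubdivDecomp.Admissible {m : ℕ} {q : Fin (m + 1) → ℚ} (D : SubdivDecomp m q) : Prop :=
  ∀ i : Fin (m + 2), 1 ≤ i.val → i.val ≤ m →
    (∃ n : ℤ, D.A i = {(n : ℚ)}) ∨ (∃ n : ℤ, D.B i = {(n : ℚ)})



section Helpers
open Set

lemma IciAddIci (a b : ℚ) : Set.Ici a + Set.Ici b = Set.Ici (a + b) := by
  apply Set.Subset.antisymm (Set.Ici_add_Ici_subset a b)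
  intro x hx
  exact ⟨a, le_refl a, x - a, by simp at hx ⊢; linarith, by ring⟩

lemma IicAddIic (a b : ℚ) : Set.Iic a + Set.Iic b = Set.Iic (a + b) := by
  apply Set.Subset.antisymm (Set.Iic_add_Iic_subset a b)
  intro x hx
  exact ⟨a, le_refl a, x - a, by simp at hx ⊢; linarith, by ring⟩

lemma IccAddIcc (a b c d : ℚ) (h : a ≤ b) (h' : c ≤ d) :
    Set.Icc a b + Set.Icc c d = Set.Icc (a + c) (b + d) := by
  apply Set.Subset.antisymm (Set.Icc_add_Icc_subset a b c d)
  intro x hx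
  simp only [Set.mem_Icc] at hx
  refine ⟨max a (x - d), ⟨le_max_left _ _, max_le h (by linarith)⟩,
    x - max a (x - d), ⟨?_, ?_⟩, by ring⟩
  · rcases max_cases a (x - d) with ⟨he, _⟩ | ⟨he, _⟩ <;> rw [he] <;> linarith
  · rcases max_cases a (x - d) with ⟨he, _⟩ | ⟨he, _⟩ <;> rw [he] <;> linarith

lemma cell_eq_zero (m : ℕ) (e : Fin (m + 1) → ℚ) (i : Fin (m + 2)) (hi : i.val = 0) :
    cell m e i = Set.Ici (e 0) := by rw [cell, if_pos hi]

lemma cell_eq_last (m : ℕ) (e : Fin (m + 1) → ℚ) (i : Fin (m + 2)) (hi : i.val = m + 1) :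
    cell m e i = Set.Iic (e (Fin.last m)) := by
  rw [cell, if_neg (by omega), dif_pos hi]

lemma cell_eq_mid (m : ℕ) (e : Fin (m + 1) → ℚ) (i : Fin (m + 2)) (h1 : i.val ≠ 0)
    (h2 : i.val ≠ m + 1) :
    cell m e i = Set.Icc (e ⟨i.val, by have := i.isLt; omega⟩)
      (e ⟨i.val - 1, by have := i.isLt; omega⟩) := by
  rw [cell, if_neg h1, dif_neg h2]

lemma cell_castSucc_lower (m : ℕ) (e : Fin (m + 1) → ℚ) (j : Fin (m + 1)) :
    ∀ x ∈ cell m e j.castSucc, e j ≤ x := by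
  intro x hx
  by_cases h0 : j.val = 0
  · rw [cell_eq_zero m e _ (by rw [Fin.coe_castSucc]; omega)] at hx
    have : j = 0 := Fin.ext h0
    rw [this]; exact hx
  · rw [cell_eq_mid m e j.castSucc (by simp only [Fin.coe_castSucc]; exact h0)
      (by simp only [Fin.coe_castSucc]; exact Nat.ne_of_lt j.isLt)] at hx
    have : (⟨(j.castSucc).val, by simp only [Fin.coe_castSucc]; exact j.isLt⟩ : Fin (m+1)) = j :=
      Fin.ext (by simp)
    rw [this] at hx
    exact hx.1

lemma cell_succ_upper (m : ℕ) (e : Fin (m + 1) → ℚ) (j : Fin (m + 1)) :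
    ∀ x ∈ cell m e j.succ, x ≤ e j := by
  intro x hx
  by_cases hm : j.val = m
  · rw [cell_eq_last m e _ (by rw [Fin.val_succ]; omega)] at hx
    have : j = Fin.last m := Fin.ext (by simp [hm])
    rw [this]; exact hx
  · rw [cell_eq_mid m e j.succ (by simp only [Fin.val_succ]; omega)
      (by simp only [Fin.val_succ]; have := j.isLt; omega)] at hx
    have : (⟨(j.succ).val - 1, by have := j.succ.isLt; omega⟩ : Fin (m+1)) = j :=
      Fin.ext (by simp [Fin.val_succ])
    rw [this] at hx
    exact hx.2

lemma cell_shape (m : ℕ) (e : Fin (m + 1) → ℚ) (he : Antitone e) (i : Fin (m + 2)) :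
    (∃ p r : ℚ, p ≤ r ∧ cell m e i = Set.Icc p r) ∨
    (∃ p : ℚ, cell m e i = Set.Ici p) ∨ (∃ p : ℚ, cell m e i = Set.Iic p) := by
  by_cases h0 : i.val = 0
  · exact Or.inr (Or.inl ⟨e 0, cell_eq_zero m e i h0⟩)
  by_cases hm : i.val = m + 1
  · exact Or.inr (Or.inr ⟨e (Fin.last m), cell_eq_last m e i hm⟩)
  · refine Or.inl ⟨_, _, ?_, cell_eq_mid m e i h0 hm⟩
    exact he (by simp only [Fin.le_def]; omega)

lemma cell_cover (m : ℕ) (e : Fin (m + 1) → ℚ) : (⋃ i, cell m e i) = Set.univ := by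
  apply Set.eq_univ_of_forall
  intro x
  simp only [Set.mem_iUnion]
  have key : ∀ k : ℕ, ∀ h : k < m + 1, e ⟨k, h⟩ ≤ x → ∃ i, x ∈ cell m e i := by
    intro k
    induction k with
    | zero => exact fun h hle => ⟨0, by rw [cell_eq_zero m e 0 rfl]; exact hle⟩
    | succ k ih =>
      intro h hle
      by_cases h' : e ⟨k, by omega⟩ ≤ x
      · exact ih (by omega) h'
      · refine ⟨⟨k + 1, by omega⟩, ?_⟩
        rw [cell_eq_mid m e ⟨k + 1, by omega⟩ (Nat.succ_ne_zero k) (Nat.ne_of_lt h)]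
        exact ⟨hle, (lt_of_not_ge h').le⟩
  by_cases hex : ∃ k : ℕ, ∃ h : k < m + 1, e ⟨k, h⟩ ≤ x
  · obtain ⟨k, hk, hke⟩ := hex
    exact key k hk hke
  · push_neg at hex
    refine ⟨Fin.last (m + 1), ?_⟩
    rw [cell_eq_last m e _ (by simp)]
    exact (hex m (by omega)).le

lemma cell_add (m : ℕ) (e f : Fin (m + 1) → ℚ) (he : Antitone e) (hf : Antitone f)
    (i : Fin (m + 2)) :
    cell m e i + cell m f i = cell m (fun j => e j + f j) i := by
  by_cases h0 : i.val = 0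
  · rw [cell_eq_zero m e i h0, cell_eq_zero m f i h0, cell_eq_zero m _ i h0, IciAddIci]
  by_cases hm : i.val = m + 1
  · rw [cell_eq_last m e i hm, cell_eq_last m f i hm, cell_eq_last m _ i hm, IicAddIic]
  · have hle : (⟨i.val - 1, by have := i.isLt; omega⟩ : Fin (m + 1)) ≤
        ⟨i.val, by have := i.isLt; omega⟩ := by simp only [Fin.le_def]; omega
    rw [cell_eq_mid m e i h0 hm, cell_eq_mid m f i h0 hm, cell_eq_mid m _ i h0 hm,
      IccAddIcc _ _ _ _ (he hle) (hf hle)]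

lemma cell_image (m : ℕ) (e : Fin (m + 1) → ℚ) (c : ℚ) (i : Fin (m + 2)) :
    (fun x => x - c) '' cell m e i = cell m (fun j => e j - c) i := by
  by_cases h0 : i.val = 0
  · rw [cell_eq_zero m e i h0, cell_eq_zero m _ i h0, Set.image_sub_const_Ici]
  by_cases hm : i.val = m + 1
  · rw [cell_eq_last m e i hm, cell_eq_last m _ i hm, Set.image_sub_const_Iic]
  · rw [cell_eq_mid m e i h0 hm, cell_eq_mid m _ i h0 hm, Set.image_sub_const_Icc]

def lamAux (lam₀ : ℤ) (f : ℕ → ℤ → ℤ) : ℕ → ℤ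
  | 0 => lam₀
  | k + 1 => f k (lamAux lam₀ f k)


end Helpers

/-- The converse direction of the paper's Remark: an integer λ₀ and a binary (m+2)-tuple
a (with a_i ∈ {1, −1}) such that the breakpoint q_i is a lattice point whenever
a_i ≠ a_{i+1} determine an admissible subdivision decomposition of Ξ₀, with translation
data λ satisfying λ_{i+1} = λ_i when a_i = a_{i+1} and λ_i + λ_{i+1} = q_i when
a_i ≠ a_{i+1}, and with A_i = Δ^i − λ_i, B_i = {λ_i} (1 ≤ i ≤ m) when a_i = 1, and
B_i = Δ^i − λ_i, A_i = {λ_i} (1 ≤ i ≤ m) when a_i = −1. -/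
theorem exists_admissible_decomposition (m : ℕ) (q : Fin (m + 1) → ℚ)
    (hq : StrictAnti q) (a : Fin (m + 2) → ℤ) (ha : ∀ i, a i = 1 ∨ a i = -1)
    (hadm : ∀ i : Fin (m + 1), a i.castSucc ≠ a i.succ → ∃ n : ℤ, q i = (n : ℚ)) :
    ∀ lam₀ : ℤ, ∃ (lam : Fin (m + 2) → ℤ) (D : SubdivDecomp m q),
      lam 0 = lam₀ ∧
      (∀ i : Fin (m + 1), a i.castSucc = a i.succ → lam i.succ = lam i.castSucc) ∧
      (∀ i : Fin (m + 1), a i.castSucc ≠ a i.succ →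
        ((lam i.castSucc : ℚ) + (lam i.succ : ℚ) = q i)) ∧
      D.Admissible ∧
      (∀ i, a i = 1 → D.A i = (fun x => x - (lam i : ℚ)) '' cell m q i) ∧
      (∀ i, a i = 1 → 1 ≤ i.val → i.val ≤ m → D.B i = {((lam i : ℤ) : ℚ)}) ∧
      (∀ i, a i = -1 → D.B i = (fun x => x - (lam i : ℚ)) '' cell m q i) ∧
      (∀ i, a i = -1 → 1 ≤ i.val → i.val ≤ m → D.A i = {((lam i : ℤ) : ℚ)}) := by
  intro lam₀
  classical
  set N : Fin (m + 1) → ℤ := fun j =>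
    if h : a j.castSucc ≠ a j.succ then (hadm j h).choose else 0 with hNdef
  have hN : ∀ j, a j.castSucc ≠ a j.succ → q j = ((N j : ℤ) : ℚ) := by
    intro j h
    simp only [hNdef, dif_pos h]
    exact (hadm j h).choose_spec
  set lam : Fin (m + 2) → ℤ := fun i => lamAux lam₀ (fun k prev =>
    if h : k < m + 1 then
      (if a ⟨k, by omega⟩ = a ⟨k + 1, by omega⟩ then prev else N ⟨k, h⟩ - prev)
    else prev) i.val with hlamdef
  have hlam0 : lam 0 = lam₀ := rfl
  have hstep : ∀ j : Fin (m + 1), lam j.succ =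
      if a j.castSucc = a j.succ then lam j.castSucc else N j - lam j.castSucc := by
    intro j
    have hj := j.isLt
    show lamAux _ _ (j.val + 1) = _
    rw [lamAux, dif_pos hj]
    rfl
  have hrel1 : ∀ j : Fin (m + 1), a j.castSucc = a j.succ → lam j.succ = lam j.castSucc :=
    fun j h => by rw [hstep j, if_pos h]
  have hrel2 : ∀ j : Fin (m + 1), a j.castSucc ≠ a j.succ →
      (lam j.castSucc : ℚ) + (lam j.succ : ℚ) = q j := by
    intro j h
    rw [hstep j, if_neg h, hN j h]
    push_cast
    ring
  set eA : Fin (m + 1) → ℚ := fun j =>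
    if a j.castSucc = 1 then q j - lam j.castSucc else (lam j.castSucc : ℚ) with heAdef
  set eB : Fin (m + 1) → ℚ := fun j =>
    if a j.castSucc = 1 then (lam j.castSucc : ℚ) else q j - lam j.castSucc with heBdef
  -- values of eA, eB in terms of the successor index
  have heA_cs : ∀ j : Fin (m + 1), a j.castSucc = 1 → eA j = q j - lam j.castSucc :=
    fun j h => by simp only [heAdef, if_pos h]
  have heA_cs' : ∀ j : Fin (m + 1), a j.castSucc = -1 → eA j = (lam j.castSucc : ℚ) :=
    fun j h => by simp only [heAdef, h]; norm_num
  have heB_cs : ∀ j : Fin (m + 1), a j.castSucc = -1 → eB j = q j - lam j.castSucc :=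
    fun j h => by simp only [heBdef, h]; norm_num
  have heB_cs' : ∀ j : Fin (m + 1), a j.castSucc = 1 → eB j = (lam j.castSucc : ℚ) :=
    fun j h => by simp only [heBdef, if_pos h]
  have heA_s : ∀ j : Fin (m + 1), a j.succ = 1 → eA j = q j - lam j.succ := by
    intro j h
    rcases ha j.castSucc with h1 | h1
    · rw [heA_cs j h1, hrel1 j (h1.trans h.symm)]
    · have hne : a j.castSucc ≠ a j.succ := by rw [h1, h]; decide
      have := hrel2 j hne
      rw [heA_cs' j h1]
      linarith
  have heA_s' : ∀ j : Fin (m + 1), a j.succ = -1 → eA j = (lam j.succ : ℚ) := by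
    intro j h
    rcases ha j.castSucc with h1 | h1
    · have hne : a j.castSucc ≠ a j.succ := by rw [h1, h]; decide
      have := hrel2 j hne
      rw [heA_cs j h1]
      linarith
    · rw [heA_cs' j h1, hrel1 j (h1.trans h.symm)]
  have heB_s : ∀ j : Fin (m + 1), a j.succ = -1 → eB j = q j - lam j.succ := by
    intro j h
    rcases ha j.castSucc with h1 | h1
    · have hne : a j.castSucc ≠ a j.succ := by rw [h1, h]; decide
      have := hrel2 j hne
      rw [heB_cs' j h1]
      linarith
    · rw [heB_cs j h1, hrel1 j (h1.trans h.symm)]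
  have heB_s' : ∀ j : Fin (m + 1), a j.succ = 1 → eB j = (lam j.succ : ℚ) := by
    intro j h
    rcases ha j.castSucc with h1 | h1
    · rw [heB_cs' j h1, hrel1 j (h1.trans h.symm)]
    · have hne : a j.castSucc ≠ a j.succ := by rw [h1, h]; decide
      have := hrel2 j hne
      rw [heB_cs j h1]
      linarith
  -- antitonicity
  have hqmono : ∀ jj : Fin m, q jj.succ ≤ q jj.castSucc :=
    fun jj => (hq ((Fin.castSucc_lt_succ (i := jj)))).le
  have hantiA : Antitone eA := by
    rw [Fin.antitone_iff_succ_le]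
    intro jj
    have hcs : (jj.succ).castSucc = (jj.castSucc).succ := (Fin.succ_castSucc jj).symm
    rcases ha ((jj.castSucc).succ) with h1 | h1
    · rw [heA_cs jj.succ (by rw [hcs]; exact h1), heA_s jj.castSucc h1, hcs]
      have := hqmono jj
      linarith
    · rw [heA_cs' jj.succ (by rw [hcs]; exact h1), heA_s' jj.castSucc h1, hcs]
  have hantiB : Antitone eB := by
    rw [Fin.antitone_iff_succ_le]
    intro jj
    have hcs : (jj.succ).castSucc = (jj.castSucc).succ := (Fin.succ_castSucc jj).symm
    rcases ha ((jj.castSucc).succ) with h1 | h1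
    · rw [heB_cs' jj.succ (by rw [hcs]; exact h1), heB_s' jj.castSucc h1, hcs]
    · rw [heB_cs jj.succ (by rw [hcs]; exact h1), heB_s jj.castSucc h1, hcs]
      have := hqmono jj
      linarith
  have hsum : (fun j => eA j + eB j) = q := by
    funext j
    simp only [heAdef, heBdef]
    split_ifs <;> ring
  -- the two key cell computations
  have main : ∀ (e : Fin (m + 1) → ℚ) (i : Fin (m + 2)) (c : ℚ),
      (∀ j : Fin (m + 1), j.castSucc = i → e j = q j - c) →
      (∀ j : Fin (m + 1), j.succ = i → e j = q j - c) →
      cell m e i = cell m (fun j => q j - c) i := by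
    intro e i c hcs hs
    by_cases h0 : i.val = 0
    · rw [cell_eq_zero m e i h0, cell_eq_zero m _ i h0,
        hcs 0 (Fin.ext (by simp [h0]))]
    by_cases hm : i.val = m + 1
    · rw [cell_eq_last m e i hm, cell_eq_last m _ i hm,
        hs (Fin.last m) (Fin.ext (by simp [hm]))]
    · rw [cell_eq_mid m e i h0 hm, cell_eq_mid m _ i h0 hm,
        hcs ⟨i.val, by have := i.isLt; omega⟩ (Fin.ext (by simp)),
        hs ⟨i.val - 1, by have := i.isLt; omega⟩ (Fin.ext (by simp; omega))]
  have mainS : ∀ (e : Fin (m + 1) → ℚ) (i : Fin (m + 2)) (c : ℚ), 1 ≤ i.val → i.val ≤ m →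
      (∀ j : Fin (m + 1), j.castSucc = i → e j = c) →
      (∀ j : Fin (m + 1), j.succ = i → e j = c) →
      cell m e i = {c} := by
    intro e i c h1 h2 hcs hs
    rw [cell_eq_mid m e i (by omega) (by omega),
      hcs ⟨i.val, by have := i.isLt; omega⟩ (Fin.ext (by simp)),
      hs ⟨i.val - 1, by have := i.isLt; omega⟩ (Fin.ext (by simp; omega)),
      Set.Icc_self]
  -- castSucc/succ-indexed value lemmas keyed on the cell index i
  have hA1 : ∀ i : Fin (m + 2), a i = 1 →
      cell m eA i = cell m (fun j => q j - (lam i : ℚ)) i := by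
    intro i hi
    refine main eA i (lam i) (fun j hj => ?_) (fun j hj => ?_)
    · rw [heA_cs j (by rw [hj]; exact hi), hj]
    · rw [heA_s j (by rw [hj]; exact hi), hj]
  have hB1 : ∀ i : Fin (m + 2), a i = -1 →
      cell m eB i = cell m (fun j => q j - (lam i : ℚ)) i := by
    intro i hi
    refine main eB i (lam i) (fun j hj => ?_) (fun j hj => ?_)
    · rw [heB_cs j (by rw [hj]; exact hi), hj]
    · rw [heB_s j (by rw [hj]; exact hi), hj]
  have hB1s : ∀ i : Fin (m + 2), a i = 1 → 1 ≤ i.val → i.val ≤ m →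
      cell m eB i = {((lam i : ℤ) : ℚ)} := by
    intro i hi h1 h2
    refine mainS eB i _ h1 h2 (fun j hj => ?_) (fun j hj => ?_)
    · rw [heB_cs' j (by rw [hj]; exact hi), hj]
    · rw [heB_s' j (by rw [hj]; exact hi), hj]
  have hA1s : ∀ i : Fin (m + 2), a i = -1 → 1 ≤ i.val → i.val ≤ m →
      cell m eA i = {((lam i : ℤ) : ℚ)} := by
    intro i hi h1 h2
    refine mainS eA i _ h1 h2 (fun j hj => ?_) (fun j hj => ?_)
    · rw [heA_cs' j (by rw [hj]; exact hi), hj]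
    · rw [heA_s' j (by rw [hj]; exact hi), hj]
  refine ⟨lam, ⟨cell m eA, cell m eB, cell_shape m eA hantiA, cell_shape m eB hantiB,
      fun i => by rw [cell_add m eA eB hantiA hantiB i, hsum],
      fun j x hx y hy => le_trans (cell_succ_upper m eA j x hx) (cell_castSucc_lower m eA j y hy),
      fun j x hx y hy => le_trans (cell_succ_upper m eB j x hx) (cell_castSucc_lower m eB j y hy),
      cell_cover m eA, cell_cover m eB⟩,
    hlam0, hrel1, hrel2, ?_, ?_, ?_, ?_, ?_⟩
  · intro i h1 h2
    rcases ha i with hi | hi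
    · exact Or.inr ⟨lam i, hB1s i hi h1 h2⟩
    · exact Or.inl ⟨lam i, hA1s i hi h1 h2⟩
  · intro i hi
    show cell m eA i = _
    rw [cell_image m q (lam i) i]
    exact hA1 i hi
  · intro i hi h1 h2
    exact hB1s i hi h1 h2
  · intro i hi
    show cell m eB i = _
    rw [cell_image m q (lam i) i]
    exact hB1 i hi
  · intro i hi h1 h2
    exact hA1s i hi h1 h2
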